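/- (von Staudt) If p is a prime and 2k < p - 1 for a positive integer k, then p does not divide the denominator of the Bernoulli number B_{2k} (written in lowest terms). -/

import Mathlib

open Finset

section VonStaudtAux

variable (p : ℕ) [hpf : Fact p.Prime]

private lemma vs_norm_sub_le_max (a b : ℚ_[p]) : ‖a - b‖ ≤ max ‖a‖ ‖b‖ := by
  have h := Padic.nonarchimedean a (-b)
  simpa [sub_eq_add_neg] using h

private lemma vs_lt_three_pow {j : ℕ} (hj : 2 ≤ j) : j < 3 ^ (j - 1) := by
  induction j with
  | zero => omega
  | succ n ih =>
    rcases Nat.lt_or_ge n 2 with hn | hn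
    · have : n = 0 ∨ n = 1 := by omega
      rcases this with rfl | rfl
      · omega
      · norm_num
    · have h := ih (by omega)
      have h1 : n + 1 - 1 = (n - 1) + 1 := by omega
      rw [h1, pow_succ]
      have h2 : 1 ≤ 3 ^ (n - 1) := Nat.one_le_pow _ _ (by norm_num)
      omega

private lemma vs_nat_norm_le_one (n : ℕ) : ‖(n : ℚ_[p])‖ ≤ 1 := by
  have := Padic.norm_int_le_one (p := p) (n : ℤ)
  simpa using this

private lemma vs_nat_norm_eq_one {t : ℕ} (ht : ¬ p ∣ t) : ‖(t : ℚ_[p])‖ = 1 := by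
  refine le_antisymm (vs_nat_norm_le_one p t) ?_
  by_contra hlt
  push_neg at hlt
  have h2 : ‖((t : ℤ) : ℚ_[p])‖ < 1 := by simpa using hlt
  rw [Padic.norm_intCast_lt_one_iff] at h2
  exact ht (by exact_mod_cast h2)

/-- `‖p^e / j‖ = (1/p)^(e - v_p(j))` for `v_p(j) ≤ e`. -/
private lemma vs_norm_ppow_div {j e : ℕ} (hj : j ≠ 0) (he : padicValNat p j ≤ e) :
    ‖((p : ℚ_[p]) ^ e / (j : ℚ_[p]))‖ = ((p : ℝ)⁻¹) ^ (e - padicValNat p j) := by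
  set v := padicValNat p j with hv
  have hfact : j.factorization p = v := Nat.factorization_def j hpf.out
  have h1 : p ^ v * (j / p ^ v) = j := by
    have := Nat.ordProj_mul_ordCompl_eq_self j p
    rwa [hfact] at this
  set t := j / p ^ v with htdef
  have htp : ¬ p ∣ t := by
    have := Nat.not_dvd_ordCompl hpf.out hj
    rwa [hfact] at this
  have htnorm : ‖(t : ℚ_[p])‖ = 1 := vs_nat_norm_eq_one p htp
  have hppos : (0 : ℝ) < p := by exact_mod_cast hpf.out.pos
  have hpne : (p : ℚ_[p]) ≠ 0 := by
    exact_mod_cast (Nat.cast_ne_zero (R := ℚ_[p])).mpr hpf.out.ne_zero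
  have hcast : (j : ℚ_[p]) = (p : ℚ_[p]) ^ v * t := by exact_mod_cast h1.symm
  have he' : e = (e - v) + v := (Nat.sub_add_cancel he).symm
  rw [hcast, he', pow_add]
  have hrw : (p : ℚ_[p]) ^ (e - v) * (p : ℚ_[p]) ^ v / ((p : ℚ_[p]) ^ v * t)
      = (p : ℚ_[p]) ^ (e - v) / t := by
    rw [mul_comm ((p : ℚ_[p]) ^ (e - v)) _, mul_div_mul_left _ _ (pow_ne_zero v hpne)]
  rw [hrw, norm_div, norm_pow, Padic.norm_p, htnorm, div_one]
  congr 1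
  omega

private lemma vs_val_lt {j : ℕ} (hj : 1 ≤ j) : padicValNat p j < j := by
  by_contra hc
  push_neg at hc
  have h1 : p ^ j ∣ j := dvd_trans (pow_dvd_pow p hc) pow_padicValNat_dvd
  have h2 : p ^ j ≤ j := Nat.le_of_dvd (by omega) h1
  have h3 : j < 2 ^ j := Nat.lt_two_pow_self
  have h4 : 2 ^ j ≤ p ^ j := Nat.pow_le_pow_left hpf.out.two_le j
  omega

private lemma vs_val_lt' (hp3 : 3 ≤ p) {j : ℕ} (hj : 2 ≤ j) :
    padicValNat p j + 1 < j := by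
  by_contra hc
  push_neg at hc
  have hvlt := vs_val_lt p (show 1 ≤ j by omega)
  have hveq : padicValNat p j = j - 1 := by omega
  have h1 : p ^ (j - 1) ∣ j := by rw [← hveq]; exact pow_padicValNat_dvd
  have h2 : p ^ (j - 1) ≤ j := Nat.le_of_dvd (by omega) h1
  have h3 : j < 3 ^ (j - 1) := vs_lt_three_pow hj
  have h4 : 3 ^ (j - 1) ≤ p ^ (j - 1) := Nat.pow_le_pow_left hp3 (j - 1)
  omega

private lemma vs_bound1 {j : ℕ} (hj : 2 ≤ j) : ‖((p : ℚ_[p]) ^ (j - 1) / (j : ℚ_[p]))‖ ≤ 1 := by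
  have hvlt := vs_val_lt p (show 1 ≤ j by omega)
  rw [vs_norm_ppow_div p (by omega) (by omega)]
  have hppos : (0 : ℝ) < p := by exact_mod_cast hpf.out.pos
  have h1 : (p : ℝ)⁻¹ ≤ 1 := by
    rw [inv_le_one_iff₀]; right; exact_mod_cast hpf.out.one_le
  exact pow_le_one₀ (by positivity) h1

private lemma vs_bound2 (hp3 : 3 ≤ p) {j : ℕ} (hj : 2 ≤ j) :
    ‖((p : ℚ_[p]) ^ (j - 1) / (j : ℚ_[p]))‖ ≤ (p : ℝ)⁻¹ := by
  have hvlt := vs_val_lt' p hp3 hj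
  rw [vs_norm_ppow_div p (by omega) (by omega)]
  have hppos : (0 : ℝ) < p := by exact_mod_cast hpf.out.pos
  have h1 : (p : ℝ)⁻¹ ≤ 1 := by
    rw [inv_le_one_iff₀]; right; exact_mod_cast hpf.out.one_le
  calc ((p : ℝ)⁻¹) ^ (j - 1 - padicValNat p j) ≤ ((p : ℝ)⁻¹) ^ 1 :=
        pow_le_pow_of_le_one (by positivity) h1 (by omega)
    _ = (p : ℝ)⁻¹ := pow_one _

/-- The key identity: `p * B_m = (∑_{x<p} x^m) - ∑_{i<m} B_i C(m,i) p^(m+1-i)/(m+1-i)`. -/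
private lemma vs_bern_id (m : ℕ) :
    (p : ℚ) * bernoulli m =
      (∑ x ∈ range p, (x : ℚ) ^ m) -
        ∑ i ∈ range m, bernoulli i * (m.choose i) * (p : ℚ) ^ (m + 1 - i) / ((m + 1 - i : ℕ) : ℚ) := by
  have h := sum_range_pow p m
  rw [Finset.sum_range_succ] at h
  have hm1 : ((m : ℚ) + 1) ≠ 0 := by positivity
  have hlast : bernoulli m * (((m + 1).choose m : ℕ) : ℚ) * (p : ℚ) ^ (m + 1 - m) / ((m : ℚ) + 1)
      = (p : ℚ) * bernoulli m := by
    rw [Nat.choose_succ_self_right, show m + 1 - m = 1 by omega, pow_one]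
    push_cast
    field_simp
  have hterm : ∀ i ∈ range m,
      bernoulli i * (((m + 1).choose i : ℕ) : ℚ) * (p : ℚ) ^ (m + 1 - i) / ((m : ℚ) + 1)
      = bernoulli i * (m.choose i) * (p : ℚ) ^ (m + 1 - i) / ((m + 1 - i : ℕ) : ℚ) := by
    intro i hi
    rw [Finset.mem_range] at hi
    have him : i ≤ m := le_of_lt hi
    have hnat : (m + 1).choose i * (m + 1 - i) = m.choose i * (m + 1) := by
      have h1 := Nat.add_one_mul_choose_eq m (m - i)
      have h2 : m.choose (m - i) = m.choose i := Nat.choose_symm him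
      have h3 : (m + 1).choose (m - i + 1) = (m + 1).choose i := by
        have := Nat.choose_symm (show m - i + 1 ≤ m + 1 by omega) (n := m + 1)
        rw [show m + 1 - (m - i + 1) = i by omega] at this
        exact this.symm
      rw [h2, h3, show m - i + 1 = m + 1 - i by omega] at h1
      rw [← h1]
      ring
    have hq : (((m + 1).choose i : ℕ) : ℚ) * (((m + 1 - i : ℕ)) : ℚ)
        = ((m.choose i : ℕ) : ℚ) * (((m + 1 : ℕ)) : ℚ) := by exact_mod_cast congrArg (Nat.cast (R := ℚ)) hnat
    have hj0 : (((m + 1 - i : ℕ)) : ℚ) ≠ 0 := by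
      have : 0 < m + 1 - i := by omega
      positivity
    rw [div_eq_div_iff hm1 hj0]
    have hq' : (((m + 1).choose i : ℕ) : ℚ) * (((m + 1 - i : ℕ)) : ℚ)
        = ((m.choose i : ℕ) : ℚ) * ((m : ℚ) + 1) := by exact_mod_cast hnat
    linear_combination (bernoulli i * (p : ℚ) ^ (m + 1 - i)) * hq'
  rw [Finset.sum_congr rfl hterm, hlast] at h
  linarith [h]

/-- Part 1 of von Staudt-Clausen: `p * B_m` is `p`-integral for every `m`. -/
private lemma vs_p_mul_bernoulli_norm_le (m : ℕ) :
    ‖((p : ℚ_[p]) * ((bernoulli m : ℚ) : ℚ_[p]))‖ ≤ 1 := by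
  induction m using Nat.strong_induction_on with
  | _ m ih =>
    have h := congrArg (fun q : ℚ => (q : ℚ_[p])) (vs_bern_id p m)
    simp only [Rat.cast_mul, Rat.cast_sub, Rat.cast_sum, Rat.cast_div, Rat.cast_pow,
      Rat.cast_natCast] at h
    rw [h]
    refine le_trans (vs_norm_sub_le_max p _ _) (max_le ?_ ?_)
    · have hS : (∑ x ∈ range p, ((x : ℚ_[p])) ^ m)
          = (((∑ x ∈ range p, x ^ m : ℕ)) : ℚ_[p]) := by push_cast; ring
      rw [hS]
      exact vs_nat_norm_le_one p _
    · refine IsUltrametricDist.norm_sum_le_of_forall_le_of_nonneg zero_le_one ?_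
      intro i hi
      rw [Finset.mem_range] at hi
      set j := m + 1 - i with hjdef
      have hj2 : 2 ≤ j := by omega
      have hsplit : (p : ℚ_[p]) ^ j = (p : ℚ_[p]) * (p : ℚ_[p]) ^ (j - 1) := by
        rw [← pow_succ']
        congr 1
        omega
      have hrw : ((bernoulli i : ℚ) : ℚ_[p]) * ((m.choose i : ℕ) : ℚ_[p]) * (p : ℚ_[p]) ^ j
            / ((j : ℕ) : ℚ_[p])
          = ((p : ℚ_[p]) * ((bernoulli i : ℚ) : ℚ_[p])) * ((m.choose i : ℕ) : ℚ_[p])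
            * ((p : ℚ_[p]) ^ (j - 1) / ((j : ℕ) : ℚ_[p])) := by
        rw [hsplit]; ring
      rw [hrw]
      calc ‖((p : ℚ_[p]) * ((bernoulli i : ℚ) : ℚ_[p])) * ((m.choose i : ℕ) : ℚ_[p])
            * ((p : ℚ_[p]) ^ (j - 1) / ((j : ℕ) : ℚ_[p]))‖
          = ‖(p : ℚ_[p]) * ((bernoulli i : ℚ) : ℚ_[p])‖ * ‖((m.choose i : ℕ) : ℚ_[p])‖
            * ‖(p : ℚ_[p]) ^ (j - 1) / ((j : ℕ) : ℚ_[p])‖ := by rw [norm_mul, norm_mul]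
        _ ≤ 1 * 1 * 1 := by
            gcongr
            · exact ih i hi
            · exact vs_nat_norm_le_one p _
            · exact vs_bound1 p hj2
        _ = 1 := by norm_num

end VonStaudtAux

/-- (von Staudt) If `p` is prime and `2k < p - 1` for a positive integer `k`,
then `p` does not divide the denominator of `B_{2k}`. -/
theorem von_staudt (p k : ℕ) (hp : p.Prime) (hk : 1 ≤ k) (h : 2 * k < p - 1) :
    ¬ p ∣ (bernoulli (2 * k)).den := by
  haveI : Fact p.Prime := ⟨hp⟩
  haveI : NeZero p := ⟨hp.ne_zero⟩
  set m := 2 * k with hm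
  clear_value m
  have hp4 : 4 ≤ p := by
    have := hp.two_le
    omega
  have hp3 : 3 ≤ p := by omega
  have hppos : (0 : ℝ) < p := by exact_mod_cast hp.pos
  have hpinv_lt : (p : ℝ)⁻¹ < 1 := by
    rw [inv_lt_one_iff₀]; right; exact_mod_cast hp.one_lt
  -- Step 1 : ‖B_m‖_p ≤ 1
  have hnorm : ‖((bernoulli m : ℚ) : ℚ_[p])‖ ≤ 1 := by
    have hid := congrArg (fun q : ℚ => (q : ℚ_[p])) (vs_bern_id p m)
    simp only [Rat.cast_mul, Rat.cast_sub, Rat.cast_sum, Rat.cast_div, Rat.cast_pow,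
      Rat.cast_natCast] at hid
    have hmain : ‖(p : ℚ_[p]) * ((bernoulli m : ℚ) : ℚ_[p])‖ ≤ (p : ℝ)⁻¹ := by
      rw [hid]
      refine le_trans (vs_norm_sub_le_max p _ _) (max_le ?_ ?_)
      · -- the power sum is divisible by p
        have hS : (∑ x ∈ range p, ((x : ℚ_[p])) ^ m)
            = (((∑ x ∈ range p, x ^ m : ℕ)) : ℚ_[p]) := by push_cast; rfl
        rw [hS]
        set N : ℕ := ∑ x ∈ range p, x ^ m with hN
        have hdvd : p ∣ N := by
          rw [← ZMod.natCast_eq_zero_iff]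
          have hcast : ((N : ℕ) : ZMod p) = ∑ x ∈ range p, (x : ZMod p) ^ m := by
            rw [hN]; push_cast; rfl
          rw [hcast]
          have hbij : ∑ x ∈ range p, (x : ZMod p) ^ m = ∑ x : ZMod p, x ^ m := by
            refine Finset.sum_nbij' (fun x => (x : ZMod p)) (fun x => x.val) ?_ ?_ ?_ ?_ ?_
            · intro a _; exact Finset.mem_univ _
            · intro a _
              rw [Finset.mem_range]
              exact ZMod.val_lt a
            · intro a ha
              rw [Finset.mem_range] at ha
              exact ZMod.val_cast_of_lt ha
            · intro a _
              exact ZMod.natCast_rightInverse a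
            · intro a _; rfl
          rw [hbij]
          refine FiniteField.sum_pow_lt_card_sub_one (ZMod p) m ?_
          rw [ZMod.card]
          omega
        obtain ⟨t, ht⟩ := hdvd
        rw [ht]
        calc ‖(((p * t : ℕ)) : ℚ_[p])‖ = ‖(p : ℚ_[p])‖ * ‖(t : ℚ_[p])‖ := by
              push_cast; rw [norm_mul]
          _ ≤ (p : ℝ)⁻¹ * 1 := by
              gcongr
              · rw [Padic.norm_p]
              · exact vs_nat_norm_le_one p t
          _ = (p : ℝ)⁻¹ := mul_one _
      · refine IsUltrametricDist.norm_sum_le_of_forall_le_of_nonneg (by positivity) ?_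
        intro i hi
        rw [Finset.mem_range] at hi
        set j := m + 1 - i with hjdef
        have hj2 : 2 ≤ j := by omega
        have hsplit : (p : ℚ_[p]) ^ j = (p : ℚ_[p]) * (p : ℚ_[p]) ^ (j - 1) := by
          rw [← pow_succ']
          congr 1
          omega
        have hrw : ((bernoulli i : ℚ) : ℚ_[p]) * ((m.choose i : ℕ) : ℚ_[p]) * (p : ℚ_[p]) ^ j
              / ((j : ℕ) : ℚ_[p])
            = ((p : ℚ_[p]) * ((bernoulli i : ℚ) : ℚ_[p])) * ((m.choose i : ℕ) : ℚ_[p])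
              * ((p : ℚ_[p]) ^ (j - 1) / ((j : ℕ) : ℚ_[p])) := by
          rw [hsplit]; ring
        rw [hrw]
        calc ‖((p : ℚ_[p]) * ((bernoulli i : ℚ) : ℚ_[p])) * ((m.choose i : ℕ) : ℚ_[p])
              * ((p : ℚ_[p]) ^ (j - 1) / ((j : ℕ) : ℚ_[p]))‖
            = ‖(p : ℚ_[p]) * ((bernoulli i : ℚ) : ℚ_[p])‖ * ‖((m.choose i : ℕ) : ℚ_[p])‖
              * ‖(p : ℚ_[p]) ^ (j - 1) / ((j : ℕ) : ℚ_[p])‖ := by rw [norm_mul, norm_mul]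
          _ ≤ 1 * 1 * (p : ℝ)⁻¹ := by
              gcongr
              · exact vs_p_mul_bernoulli_norm_le p i
              · exact vs_nat_norm_le_one p _
              · exact vs_bound2 p hp3 hj2
          _ = (p : ℝ)⁻¹ := by ring
    have hnp : ‖(p : ℚ_[p]) * ((bernoulli m : ℚ) : ℚ_[p])‖
        = (p : ℝ)⁻¹ * ‖((bernoulli m : ℚ) : ℚ_[p])‖ := by
      rw [norm_mul, Padic.norm_p]
    rw [hnp] at hmain
    have hpinvpos : (0 : ℝ) < (p : ℝ)⁻¹ := by positivity
    calc ‖((bernoulli m : ℚ) : ℚ_[p])‖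
        = ((p : ℝ)⁻¹ * ‖((bernoulli m : ℚ) : ℚ_[p])‖) / (p : ℝ)⁻¹ := by
          field_simp
      _ ≤ (p : ℝ)⁻¹ / (p : ℝ)⁻¹ := by gcongr
      _ = 1 := by field_simp
  -- Step 2 : conclude
  intro hdvd
  obtain ⟨d, hd⟩ := hdvd
  set q : ℚ := bernoulli m with hq
  have hqden : (q.den : ℚ_[p]) * (q : ℚ_[p]) = (q.num : ℚ_[p]) := by
    have h0 : ((q.den : ℚ) * q : ℚ) = (q.num : ℚ) := by
      rw [mul_comm]
      exact_mod_cast Rat.mul_den_eq_num q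
    exact_mod_cast congrArg (fun x : ℚ => (x : ℚ_[p])) h0
  have hnumnorm : ‖((q.num : ℤ) : ℚ_[p])‖ < 1 := by
    rw [← hqden, hd]
    push_cast
    calc ‖(p : ℚ_[p]) * (d : ℚ_[p]) * (q : ℚ_[p])‖
        = ‖(p : ℚ_[p])‖ * ‖(d : ℚ_[p])‖ * ‖(q : ℚ_[p])‖ := by rw [norm_mul, norm_mul]
      _ ≤ (p : ℝ)⁻¹ * 1 * 1 := by
          rw [Padic.norm_p]
          exact mul_le_mul (mul_le_mul le_rfl (vs_nat_norm_le_one p d) (norm_nonneg _)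
            (by positivity)) hnorm (norm_nonneg _) (by positivity)
      _ = (p : ℝ)⁻¹ := by ring
      _ < 1 := hpinv_lt
  rw [Padic.norm_intCast_lt_one_iff] at hnumnorm
  have hnum' : p ∣ q.num.natAbs := by
    have := Int.natAbs_dvd_natAbs.mpr hnumnorm
    simpa using this
  have hcop := q.reduced
  have : p ∣ Nat.gcd q.num.natAbs q.den := Nat.dvd_gcd hnum' ⟨d, hd⟩
  rw [hcop] at this
  exact hp.one_lt.ne' (Nat.eq_one_of_dvd_one this)
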